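/- arXiv:1506.02137 — 5 statements merged into one kernel-verified Lean document; each statement's English description precedes it below -/
import Mathlib

section
/- For every positive integer n, the Bernoulli number B_n satisfies B_n = \sum_{i=1}^{n} (-1)^i * (binom(n+1, i+1) / binom(n+i, i)) * S(n+i, i), where S denotes the Stirling numbers of the second kind. -/
/-- Stirling numbers of the second kind. -/
def stirling2 : ℕ → ℕ → ℕ
  | 0, 0 => 1
  | 0, _ + 1 => 0
  | _ + 1, 0 => 0
  | n + 1, k + 1 => (k + 1) * stirling2 n (k + 1) + stirling2 n k

open PowerSeries Finset

lemma alt_sum_choose (k : ℕ) (hk : k ≠ 0) :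
    ∑ ℓ ∈ range (k + 1), (-1 : ℚ) ^ ℓ * (k.choose ℓ : ℚ) = 0 := by
  have h := Int.alternating_sum_range_choose_of_ne hk
  have h2 := congrArg (Int.cast : ℤ → ℚ) h
  push_cast at h2
  simpa using h2

lemma stirling2_explicit (m k : ℕ) :
    (k.factorial : ℚ) * stirling2 m k =
      (-1 : ℚ) ^ k * ∑ ℓ ∈ range (k + 1), (-1 : ℚ) ^ ℓ * (k.choose ℓ : ℚ) * (ℓ : ℚ) ^ m := by
  induction m generalizing k with
  | zero =>
    cases k with
    | zero => simp [stirling2]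
    | succ k =>
      have h : ∀ ℓ ∈ range (k + 2), (-1 : ℚ) ^ ℓ * ((k+1).choose ℓ : ℚ) * (ℓ : ℚ) ^ 0
          = (-1 : ℚ) ^ ℓ * ((k+1).choose ℓ : ℚ) := by intro ℓ _; simp
      rw [Finset.sum_congr rfl h, alt_sum_choose (k + 1) (Nat.succ_ne_zero k)]
      simp [stirling2]
  | succ m ih =>
    cases k with
    | zero => simp [stirling2]
    | succ k =>
      have hrec : (stirling2 (m + 1) (k + 1) : ℚ)
          = ((k : ℚ) + 1) * (stirling2 m (k + 1) : ℚ) + (stirling2 m k : ℚ) := by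
        show ((((k+1) * stirling2 m (k + 1) + stirling2 m k : ℕ)) : ℚ) = _
        push_cast; ring
      have hchoose : ∀ j : ℕ, (((k+1).choose (j+1) : ℚ)) * ((j : ℚ) + 1)
          = ((k : ℚ) + 1) * (k.choose j : ℚ) := by
        intro j
        have h2 := congrArg (Nat.cast : ℕ → ℚ) (Nat.add_one_mul_choose_eq k j)
        push_cast at h2
        linarith
      have hAB : ∀ j : ℕ, ((k+1).choose (j+1) : ℚ) = (k.choose j : ℚ) + (k.choose (j+1) : ℚ) := by
        intro j
        have h2 := congrArg (Nat.cast : ℕ → ℚ) (Nat.choose_succ_succ k j)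
        push_cast at h2
        linarith
      have key : ∑ ℓ ∈ range (k + 2), (-1 : ℚ) ^ ℓ * ((k+1).choose ℓ : ℚ) * (ℓ : ℚ) ^ (m + 1)
          = ((k : ℚ) + 1) *
            ((∑ ℓ ∈ range (k + 2), (-1 : ℚ) ^ ℓ * ((k+1).choose ℓ : ℚ) * (ℓ : ℚ) ^ m)
             - ∑ ℓ ∈ range (k + 1), (-1 : ℚ) ^ ℓ * (k.choose ℓ : ℚ) * (ℓ : ℚ) ^ m) := by
        have hL : ∑ ℓ ∈ range (k + 2), (-1 : ℚ) ^ ℓ * ((k+1).choose ℓ : ℚ) * (ℓ : ℚ) ^ (m + 1)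
            = ∑ j ∈ range (k + 1),
                (-1 : ℚ) ^ (j+1) * ((k+1).choose (j+1) : ℚ) * ((j : ℚ) + 1) ^ (m + 1) := by
          rw [Finset.sum_range_succ' (fun ℓ => (-1 : ℚ) ^ ℓ * ((k+1).choose ℓ : ℚ) * (ℓ : ℚ) ^ (m+1)) (k+1)]
          push_cast
          simp
        have hL2 : ∑ j ∈ range (k + 1),
              (-1 : ℚ) ^ (j+1) * ((k+1).choose (j+1) : ℚ) * ((j : ℚ) + 1) ^ (m + 1)
            = -(((k : ℚ) + 1) * ∑ j ∈ range (k + 1),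
                (-1 : ℚ) ^ j * (k.choose j : ℚ) * ((j : ℚ) + 1) ^ m) := by
          rw [Finset.mul_sum, ← Finset.sum_neg_distrib]
          refine Finset.sum_congr rfl fun j _ => ?_
          linear_combination ((-1 : ℚ) ^ (j+1) * ((j : ℚ) + 1) ^ m) * hchoose j
        have hA : ∑ ℓ ∈ range (k + 2), (-1 : ℚ) ^ ℓ * ((k+1).choose ℓ : ℚ) * (ℓ : ℚ) ^ m
            = (∑ j ∈ range (k + 1),
                (-1 : ℚ) ^ (j+1) * ((k+1).choose (j+1) : ℚ) * ((j : ℚ) + 1) ^ m) + (0 : ℚ) ^ m := by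
          rw [Finset.sum_range_succ' (fun ℓ => (-1 : ℚ) ^ ℓ * ((k+1).choose ℓ : ℚ) * (ℓ : ℚ) ^ m) (k+1)]
          push_cast
          simp
        have hB : ∑ ℓ ∈ range (k + 1), (-1 : ℚ) ^ ℓ * (k.choose ℓ : ℚ) * (ℓ : ℚ) ^ m
            = (∑ j ∈ range (k + 1),
                (-1 : ℚ) ^ (j+1) * (k.choose (j+1) : ℚ) * ((j : ℚ) + 1) ^ m) + (0 : ℚ) ^ m := by
          rw [Finset.sum_range_succ' (fun ℓ => (-1 : ℚ) ^ ℓ * (k.choose ℓ : ℚ) * (ℓ : ℚ) ^ m) k]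
          have : ∑ j ∈ range (k + 1), (-1 : ℚ) ^ (j+1) * (k.choose (j+1) : ℚ) * ((j : ℚ) + 1) ^ m
              = ∑ j ∈ range k, (-1 : ℚ) ^ (j+1) * (k.choose (j+1) : ℚ) * ((j : ℚ) + 1) ^ m := by
            rw [Finset.sum_range_succ]
            simp [Nat.choose_succ_self]
          rw [this]
          push_cast
          simp
        have h4 : (∑ j ∈ range (k + 1), (-1 : ℚ) ^ (j+1) * (k.choose (j+1) : ℚ) * ((j : ℚ) + 1) ^ m)
              - (∑ j ∈ range (k + 1), (-1 : ℚ) ^ (j+1) * ((k+1).choose (j+1) : ℚ) * ((j : ℚ) + 1) ^ m)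
            = ∑ j ∈ range (k + 1), (-1 : ℚ) ^ j * (k.choose j : ℚ) * ((j : ℚ) + 1) ^ m := by
          rw [← Finset.sum_sub_distrib]
          refine Finset.sum_congr rfl fun j _ => ?_
          linear_combination (-(-1 : ℚ) ^ (j+1) * ((j : ℚ) + 1) ^ m) * hAB j
        rw [hL, hL2, hA, hB]
        linear_combination ((k : ℚ) + 1) * h4
      have e1 : ((k+1).factorial : ℚ) = ((k : ℚ) + 1) * (k.factorial : ℚ) := by
        push_cast [Nat.factorial_succ]; ring
      have e2 := ih (k + 1)
      have ih2 := ih k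
      rw [e1] at e2
      rw [hrec, e1, key]
      have hsgn : (-1 : ℚ) ^ (k+1) = -(-1 : ℚ) ^ k := by ring
      rw [hsgn] at e2 ⊢
      linear_combination ((k : ℚ) + 1) * e2 + ((k : ℚ) + 1) * ih2

noncomputable def Fs : ℚ⟦X⟧ := PowerSeries.mk fun n => ((n+1).factorial : ℚ)⁻¹

noncomputable def Gs : ℚ⟦X⟧ := Fs - 1

lemma X_mul_Fs : (X : ℚ⟦X⟧) * Fs = exp ℚ - 1 := by
  ext n
  rw [map_sub]
  cases n with
  | zero => simp [Fs, coeff_exp]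
  | succ n => simp [Fs, coeff_succ_X_mul, coeff_exp, coeff_one, one_div]

lemma bern_mul_Fs : bernoulliPowerSeries ℚ * Fs = 1 := by
  have h := bernoulliPowerSeries_mul_exp_sub_one ℚ
  rw [← X_mul_Fs] at h
  apply mul_left_cancel₀ (X_ne_zero (R := ℚ))
  rw [mul_one]
  calc (X : ℚ⟦X⟧) * (bernoulliPowerSeries ℚ * Fs)
      = bernoulliPowerSeries ℚ * (X * Fs) := by ring
    _ = X := h

lemma X_dvd_Gs : (X : ℚ⟦X⟧) ∣ Gs := by
  rw [X_dvd_iff]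
  simp [Gs, Fs]

lemma coeff_Gs_pow_eq_zero {n j : ℕ} (h : n < j) : coeff n (Gs ^ j) = 0 :=
  X_pow_dvd_iff.mp (pow_dvd_pow_of_dvd X_dvd_Gs j) n h

lemma coeff_neg_Gs_pow (i n : ℕ) :
    coeff n ((-Gs) ^ i) = (-1 : ℚ) ^ i * coeff n (Gs ^ i) := by
  rcases Nat.even_or_odd i with h | h
  · rw [h.neg_pow, h.neg_one_pow, one_mul]
  · rw [h.neg_pow, map_neg, h.neg_one_pow]; ring

lemma bernoulli_eq_sum_coeff (n : ℕ) :
    bernoulli n = (n.factorial : ℚ) * ∑ j ∈ range (n+1), (-1 : ℚ) ^ j * coeff n (Gs ^ j) := by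
  have h1 : (∑ i ∈ range (n+1), (-Gs) ^ i) * Fs = 1 - (-Gs) ^ (n+1) := by
    have hg := geom_sum_mul (-Gs) (n+1)
    have hF : -Gs - 1 = -Fs := by rw [Gs]; ring
    rw [hF] at hg
    linear_combination -hg
  have hbp : bernoulliPowerSeries ℚ
      = (∑ i ∈ range (n+1), (-Gs) ^ i) + bernoulliPowerSeries ℚ * (-Gs) ^ (n+1) := by
    calc bernoulliPowerSeries ℚ
        = bernoulliPowerSeries ℚ * ((∑ i ∈ range (n+1), (-Gs) ^ i) * Fs + (-Gs) ^ (n+1)) := by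
          rw [h1]; ring
      _ = (bernoulliPowerSeries ℚ * Fs) * (∑ i ∈ range (n+1), (-Gs) ^ i)
            + bernoulliPowerSeries ℚ * (-Gs) ^ (n+1) := by ring
      _ = _ := by rw [bern_mul_Fs]; ring
  have hco := congrArg (coeff n) hbp
  rw [map_add, map_sum] at hco
  have hz : coeff n (bernoulliPowerSeries ℚ * (-Gs) ^ (n+1)) = 0 := by
    have hdvd : (X : ℚ⟦X⟧) ^ (n+1) ∣ bernoulliPowerSeries ℚ * (-Gs) ^ (n+1) :=
      Dvd.dvd.mul_left (pow_dvd_pow_of_dvd (dvd_neg.mpr X_dvd_Gs) (n+1)) _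
    exact X_pow_dvd_iff.mp hdvd n (Nat.lt_succ_self n)
  rw [hz, add_zero] at hco
  have hcoe : coeff n (bernoulliPowerSeries ℚ) = bernoulli n / n.factorial := by
    simp [bernoulliPowerSeries, coeff_mk]
  rw [hcoe] at hco
  have hfac : (n.factorial : ℚ) ≠ 0 := Nat.cast_ne_zero.mpr n.factorial_ne_zero
  rw [div_eq_iff hfac] at hco
  rw [hco]
  rw [Finset.sum_congr rfl fun i _ => coeff_neg_Gs_pow i n]
  ring

lemma coeff_Fs_pow (n k : ℕ) (hk : k ≤ n) :
    coeff n (Fs ^ k) = ∑ j ∈ range (n+1), (k.choose j : ℚ) * coeff n (Gs ^ j) := by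
  have hFs : Fs = Gs + 1 := by rw [Gs]; ring
  have hpow : Fs ^ k = ∑ j ∈ range (k+1), Gs ^ j * (k.choose j : ℚ⟦X⟧) := by
    rw [hFs]
    rw [add_pow]
    refine Finset.sum_congr rfl fun j _ => ?_
    rw [one_pow, mul_one]
  rw [hpow, map_sum]
  rw [Finset.sum_subset (Finset.range_subset_range.2 (by omega) : range (k+1) ⊆ range (n+1))]
  · refine Finset.sum_congr rfl fun j _ => ?_
    rw [mul_comm, ← map_natCast (C (R := ℚ)) (k.choose j), coeff_C_mul]
  · intro j _ hj
    rw [mem_range, not_lt] at hj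
    have : k.choose j = 0 := Nat.choose_eq_zero_of_lt (by omega)
    simp [this]

lemma coeff_exp_sub_one_pow (k m : ℕ) :
    coeff m ((exp ℚ - 1) ^ k)
      = (k.factorial : ℚ) * (stirling2 m k : ℚ) / (m.factorial : ℚ) := by
  have h1 : (exp ℚ - 1) ^ k = (-1 : ℚ⟦X⟧) ^ k * ∑ ℓ ∈ range (k+1),
      (-1 : ℚ⟦X⟧) ^ ℓ * (k.choose ℓ : ℚ⟦X⟧) * exp ℚ ^ ℓ := by
    have : exp ℚ - 1 = -(1 - exp ℚ) := by ring
    rw [this, neg_pow]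
    congr 1
    have h2 : (1 : ℚ⟦X⟧) - exp ℚ = -exp ℚ + 1 := by ring
    rw [h2, add_pow]
    refine Finset.sum_congr rfl fun ℓ _ => ?_
    rw [one_pow, neg_pow]
    ring
  rw [h1]
  have hcast : ((-1 : ℚ⟦X⟧) = C (-1 : ℚ)) := by simp
  rw [hcast, ← map_pow, coeff_C_mul, map_sum]
  have hterm : ∀ ℓ ∈ range (k+1),
      coeff m ((C (-1 : ℚ)) ^ ℓ * (k.choose ℓ : ℚ⟦X⟧) * exp ℚ ^ ℓ)
        = (-1 : ℚ) ^ ℓ * (k.choose ℓ : ℚ) * (ℓ : ℚ) ^ m / (m.factorial : ℚ) := by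
    intro ℓ _
    rw [exp_pow_eq_rescale_exp, ← map_natCast (C (R := ℚ)) (k.choose ℓ), ← map_pow, ← map_mul,
      coeff_C_mul, coeff_rescale, coeff_exp]
    simp [one_div]
    ring
  rw [Finset.sum_congr rfl hterm]
  rw [stirling2_explicit]
  rw [← Finset.sum_div]
  ring

lemma stirling2_eq_coeff (n i : ℕ) :
    (stirling2 (n + i) i : ℚ)
      = ((n + i).choose i : ℚ) * (n.factorial : ℚ) * coeff n (Fs ^ i) := by
  have h1 : coeff n (Fs ^ i) = coeff (n + i) ((exp ℚ - 1) ^ i) := by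
    rw [← X_mul_Fs, mul_pow, coeff_X_pow_mul]
  rw [h1, coeff_exp_sub_one_pow]
  have hfac : ((n + i).choose i : ℚ) * (i.factorial : ℚ) * (n.factorial : ℚ)
      = ((n + i).factorial : ℚ) := by
    have := Nat.choose_mul_factorial_mul_factorial (Nat.le_add_left i n)
    rw [Nat.add_sub_cancel] at this
    exact_mod_cast congrArg (Nat.cast : ℕ → ℚ) this
  have h2 : ((n + i).factorial : ℚ) ≠ 0 := Nat.cast_ne_zero.mpr (Nat.factorial_ne_zero _)
  field_simp
  linear_combination (-(stirling2 (n + i) i : ℚ)) * hfac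

lemma alt_sum_choose_choose (N j : ℕ) (hj : j < N) :
    ∑ k ∈ range (N + 1), (-1 : ℚ) ^ k * (N.choose k : ℚ) * (k.choose j : ℚ) = 0 := by
  have hsub : ∑ k ∈ range (N + 1), (-1 : ℚ) ^ k * (N.choose k : ℚ) * (k.choose j : ℚ)
      = ∑ k ∈ Ico j (N + 1), (-1 : ℚ) ^ k * (N.choose k : ℚ) * (k.choose j : ℚ) := by
    refine (Finset.sum_subset ?_ ?_).symm
    · intro x hx
      rw [mem_Ico] at hx
      exact mem_range.mpr hx.2
    · intro x hx hx'
      rw [mem_range] at hx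
      rw [mem_Ico, not_and_or, not_le] at hx'
      have hxj : x < j := by omega
      simp [Nat.choose_eq_zero_of_lt hxj]
  rw [hsub, Finset.sum_Ico_eq_sum_range]
  have hNj : N + 1 - j = (N - j) + 1 := by omega
  rw [hNj]
  have hterm : ∀ i ∈ range ((N - j) + 1),
      (-1 : ℚ) ^ (j + i) * (N.choose (j + i) : ℚ) * ((j + i).choose j : ℚ)
        = ((-1 : ℚ) ^ j * (N.choose j : ℚ)) * ((-1 : ℚ) ^ i * ((N - j).choose i : ℚ)) := by
    intro i hi
    rw [mem_range] at hi
    have h1 : N.choose (j + i) * (j + i).choose j = N.choose j * (N - j).choose i := by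
      have := Nat.choose_mul (n := N) (Nat.le_add_right j i)
      simpa [Nat.add_sub_cancel_left] using this
    have h2 := congrArg (Nat.cast : ℕ → ℚ) h1
    push_cast at h2
    rw [pow_add]
    linear_combination ((-1 : ℚ) ^ j * (-1 : ℚ) ^ i) * h2
  rw [Finset.sum_congr rfl hterm, ← Finset.mul_sum,
    alt_sum_choose (N - j) (by omega), mul_zero]

lemma T_eq (n j : ℕ) (hj : j ≤ n) :
    ∑ k ∈ range (n + 1), (-1 : ℚ) ^ k * ((n + 1).choose (k + 1) : ℚ) * (k.choose j : ℚ)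
      = (-1 : ℚ) ^ j := by
  induction n, hj using Nat.le_induction with
  | base =>
    rw [Finset.sum_eq_single j]
    · simp
    · intro k hk hkj
      rw [mem_range] at hk
      have : k < j := by omega
      simp [Nat.choose_eq_zero_of_lt this]
    · intro h
      exact absurd (mem_range.mpr (by omega)) h
  | succ n hn ih =>
    have hsplit : ∀ k ∈ range (n + 2),
        (-1 : ℚ) ^ k * ((n + 2).choose (k + 1) : ℚ) * (k.choose j : ℚ)
          = (-1 : ℚ) ^ k * ((n + 1).choose k : ℚ) * (k.choose j : ℚ)
            + (-1 : ℚ) ^ k * ((n + 1).choose (k + 1) : ℚ) * (k.choose j : ℚ) := by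
      intro k _
      have h2 := congrArg (Nat.cast : ℕ → ℚ) (Nat.choose_succ_succ (n + 1) k)
      simp only [Nat.succ_eq_add_one] at h2
      push_cast at h2
      linear_combination ((-1 : ℚ) ^ k * (k.choose j : ℚ)) * h2
    rw [show n + 1 + 1 = n + 2 by rfl]
    rw [Finset.sum_congr rfl hsplit, Finset.sum_add_distrib]
    rw [alt_sum_choose_choose (n + 1) j (by omega)]
    rw [Finset.sum_range_succ]
    have hz : (n + 1).choose (n + 1 + 1) = 0 := Nat.choose_eq_zero_of_lt (by omega)
    rw [hz, ih]
    push_cast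
    ring

theorem bernoulli_eq_sum_stirling (n : ℕ) (hn : 0 < n) :
    bernoulli n =
      ∑ i ∈ Finset.Icc 1 n,
        (-1 : ℚ) ^ i * (((n + 1).choose (i + 1) : ℚ) / ((n + i).choose i : ℚ)) *
          (stirling2 (n + i) i : ℚ) := by
  have hc0 : coeff n (Gs ^ 0) = 0 := by
    simp [coeff_one, hn.ne']
  have hterm : ∀ i ∈ Icc 1 n,
      (-1 : ℚ) ^ i * (((n + 1).choose (i + 1) : ℚ) / ((n + i).choose i : ℚ)) *
          (stirling2 (n + i) i : ℚ)
        = ∑ j ∈ range (n + 1),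
            ((-1 : ℚ) ^ i * ((n + 1).choose (i + 1) : ℚ) * (i.choose j : ℚ))
              * ((n.factorial : ℚ) * coeff n (Gs ^ j)) := by
    intro i hi
    rw [mem_Icc] at hi
    have hB : ((n + i).choose i : ℚ) ≠ 0 :=
      Nat.cast_ne_zero.mpr (Nat.choose_pos (Nat.le_add_left i n)).ne'
    rw [stirling2_eq_coeff n i, coeff_Fs_pow n i hi.2, Finset.mul_sum, Finset.mul_sum]
    refine Finset.sum_congr rfl fun j _ => ?_
    field_simp
  rw [Finset.sum_congr rfl hterm, Finset.sum_comm]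
  have hinner : ∀ j ∈ range (n + 1),
      ∑ i ∈ Icc 1 n,
          ((-1 : ℚ) ^ i * ((n + 1).choose (i + 1) : ℚ) * (i.choose j : ℚ))
            * ((n.factorial : ℚ) * coeff n (Gs ^ j))
        = (-1 : ℚ) ^ j * ((n.factorial : ℚ) * coeff n (Gs ^ j)) := by
    intro j hj
    rw [← Finset.sum_mul]
    rcases Nat.eq_zero_or_pos j with rfl | hjpos
    · rw [hc0]; ring
    · congr 1
      have hrange : range (n + 1) = insert 0 (Icc 1 n) := by
        ext x; simp [mem_Icc]; omega
      have hT := T_eq n j (by rw [mem_range] at hj; omega)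
      rw [hrange, Finset.sum_insert (by simp)] at hT
      have h0 : (-1 : ℚ) ^ 0 * ((n + 1).choose (0 + 1) : ℚ) * ((0 : ℕ).choose j : ℚ) = 0 := by
        simp [Nat.choose_eq_zero_of_lt hjpos]
      rw [h0, zero_add] at hT
      exact hT
  rw [Finset.sum_congr rfl hinner]
  rw [bernoulli_eq_sum_coeff n, Finset.mul_sum]
  exact Finset.sum_congr rfl fun j _ => by ring
end

section
/- For every positive integer k and every real (or complex) number u, the Bernoulli polynomial B_k(u) equals (-1)^k times the determinant of the k×k matrix whose entry in row \ell (1 \le \ell \le k) and column m (0 \le m \le k-1) is (1/(\ell+1)) * binom(\ell+1, m) * [(1-u)^{\ell-m+1} - (-u)^{\ell-m+1}], with the convention binom(p,q) = 0 for q > p. -/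
namespace BernoulliDetAux
open Finset Polynomial

noncomputable def fB (u : ℝ) (j : ℕ) : ℝ :=
  Polynomial.eval u ((Polynomial.bernoulli j).map (algebraMap ℚ ℝ))

lemma fB_eq (u : ℝ) (j : ℕ) :
    fB u j = ∑ i ∈ range (j+1), ((_root_.bernoulli i : ℚ) : ℝ) * (j.choose i : ℝ) * u ^ (j - i) := by
  simp [fB, Polynomial.bernoulli, Polynomial.eval_map, Polynomial.eval₂_finset_sum,
    Polynomial.eval₂_monomial]

lemma fB_S (u x : ℝ) (n : ℕ) :
    ∑ j ∈ range (n+1), (n.choose j : ℝ) * fB u j * x ^ (n - j)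
    = ∑ i ∈ range (n+1), (n.choose i : ℝ) * ((_root_.bernoulli i : ℚ) : ℝ) * (u + x) ^ (n - i) := by
  have step1 : ∀ j ∈ range (n+1), (n.choose j : ℝ) * fB u j * x ^ (n - j)
      = ∑ i ∈ range (n+1),
        (n.choose j : ℝ) * (((_root_.bernoulli i : ℚ) : ℝ) * (j.choose i : ℝ) * u ^ (j - i)) * x ^ (n - j) := by
    intro j hj
    rw [fB_eq, Finset.mul_sum, Finset.sum_mul]
    refine (Finset.sum_subset (Finset.range_subset_range.2
      (Nat.succ_le_succ (Nat.lt_succ_iff.1 (Finset.mem_range.1 hj))))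
      (fun i _ hi => by
        rw [Nat.choose_eq_zero_of_lt (show j < i by simp only [Finset.mem_range] at hi; omega)]
        push_cast; ring))
  rw [Finset.sum_congr rfl step1, Finset.sum_comm]
  refine Finset.sum_congr rfl fun i hi => ?_
  have hi' : i ≤ n := Nat.lt_succ_iff.1 (Finset.mem_range.1 hi)
  -- restrict outer (now inner over j) sum to j ∈ Ico i (n+1)
  have step2 : ∑ j ∈ range (n+1),
      (n.choose j : ℝ) * (((_root_.bernoulli i : ℚ) : ℝ) * (j.choose i : ℝ) * u ^ (j - i)) * x ^ (n - j)
      = ∑ j ∈ Finset.Ico i (n+1),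
      (n.choose j : ℝ) * (((_root_.bernoulli i : ℚ) : ℝ) * (j.choose i : ℝ) * u ^ (j - i)) * x ^ (n - j) := by
    rw [Finset.range_eq_Ico]
    refine (Finset.sum_subset (Finset.Ico_subset_Ico (Nat.zero_le _) le_rfl)
      (fun j hj hj' => by
        have : j < i := by
          simp only [Finset.mem_Ico] at hj hj'
          omega
        rw [Nat.choose_eq_zero_of_lt this]
        push_cast; ring)).symm
  rw [step2, Finset.sum_Ico_eq_sum_range, add_pow]
  have hni : n + 1 - i = n - i + 1 := by omega
  rw [hni, Finset.mul_sum]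
  refine Finset.sum_congr rfl fun t ht => ?_
  have ht' : t ≤ n - i := Nat.lt_succ_iff.1 (Finset.mem_range.1 ht)
  have h1 : n.choose (i + t) * (i + t).choose i = n.choose i * (n - i).choose t := by
    have := Nat.choose_mul (n := n) (k := i + t) (show i ≤ i + t by omega)
    simpa using this
  have h2 : i + t - i = t := by omega
  have h3 : n - (i + t) = n - i - t := by omega
  rw [h2, h3]
  have h1' : (n.choose (i+t) : ℝ) * ((i+t).choose i : ℝ) = (n.choose i : ℝ) * ((n-i).choose t : ℝ) := by
    exact_mod_cast congrArg (Nat.cast : ℕ → ℝ) h1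
  calc (n.choose (i+t) : ℝ) * (((_root_.bernoulli i : ℚ) : ℝ) * ((i+t).choose i : ℝ) * u ^ t) * x ^ (n - i - t)
      = ((n.choose (i+t) : ℝ) * ((i+t).choose i : ℝ)) * ((_root_.bernoulli i : ℚ) : ℝ) * u ^ t * x ^ (n - i - t) := by ring
    _ = ((n.choose i : ℝ) * ((n-i).choose t : ℝ)) * ((_root_.bernoulli i : ℚ) : ℝ) * u ^ t * x ^ (n - i - t) := by rw [h1']
    _ = (n.choose i : ℝ) * ((_root_.bernoulli i : ℚ) : ℝ) * (u ^ t * x ^ (n - i - t) * ((n-i).choose t : ℝ)) := by ring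

lemma row_rel (u : ℝ) (n : ℕ) (hn : 2 ≤ n) :
    ∑ j ∈ range (n+1), (n.choose j : ℝ) * fB u j * ((1-u) ^ (n - j) - (-u) ^ (n - j)) = 0 := by
  have h : ∑ j ∈ range (n+1), (n.choose j : ℝ) * fB u j * ((1-u) ^ (n - j) - (-u) ^ (n - j))
      = (∑ j ∈ range (n+1), (n.choose j : ℝ) * fB u j * (1-u) ^ (n - j))
        - ∑ j ∈ range (n+1), (n.choose j : ℝ) * fB u j * (-u) ^ (n - j) := by
    rw [← Finset.sum_sub_distrib]; exact Finset.sum_congr rfl fun j _ => by ring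
  rw [h, fB_S, fB_S]
  have hu1 : u + (1 - u) = 1 := by ring
  have hu0 : u + -u = 0 := by ring
  rw [hu1, hu0, ← Finset.sum_sub_distrib]
  have : ∀ j ∈ range (n+1), (n.choose j : ℝ) * ((_root_.bernoulli j : ℚ) : ℝ) * (1:ℝ) ^ (n - j)
      - (n.choose j : ℝ) * ((_root_.bernoulli j : ℚ) : ℝ) * (0:ℝ) ^ (n - j)
      = if j = n then 0 else (n.choose j : ℝ) * ((_root_.bernoulli j : ℚ) : ℝ) := by
    intro j hj
    rcases eq_or_ne j n with rfl | hne
    · simp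
    · have : n - j ≠ 0 := by
        have := Finset.mem_range.1 hj; omega
      rw [one_pow, zero_pow this, if_neg hne]; ring
  rw [Finset.sum_congr rfl this, Finset.sum_range_succ, if_pos rfl, add_zero]
  have hz : ∑ j ∈ range n, ((if j = n then (0:ℝ) else (n.choose j : ℝ) * ((_root_.bernoulli j : ℚ) : ℝ)))
      = ∑ j ∈ range n, (n.choose j : ℝ) * ((_root_.bernoulli j : ℚ) : ℝ) := by
    refine Finset.sum_congr rfl fun j hj => ?_
    rw [if_neg (by have := Finset.mem_range.1 hj; omega)]
  rw [hz]
  have := _root_.sum_bernoulli n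
  rw [if_neg (by omega)] at this
  calc ∑ j ∈ range n, (n.choose j : ℝ) * ((_root_.bernoulli j : ℚ) : ℝ)
      = ((∑ j ∈ range n, (n.choose j : ℚ) * _root_.bernoulli j : ℚ) : ℝ) := by push_cast; rfl
    _ = 0 := by rw [this]; norm_num

noncomputable def aM (u : ℝ) (r j : ℕ) : ℝ :=
  (1 / ((r + 1 : ℕ) + 1 : ℝ)) * (((r + 1) + 1).choose j : ℝ) *
    ((1 - u) ^ (r + 2 - j) - (-u) ^ (r + 2 - j))

lemma aM_zero (u : ℝ) (r j : ℕ) (h : r + 2 ≤ j) : aM u r j = 0 := by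
  rcases eq_or_lt_of_le h with rfl | h'
  · simp [aM]
  · rw [aM, Nat.choose_eq_zero_of_lt (by omega)]
    simp

lemma aM_diag (u : ℝ) (r : ℕ) : aM u r (r+1) = 1 := by
  rw [aM]
  have h1 : r + 2 - (r + 1) = 1 := by omega
  have h2 : (r + 1 + 1).choose (r + 1) = r + 2 := by
    exact Nat.choose_succ_self_right (r+1)
  rw [h1, h2]
  have : ((r:ℕ) + 1 + 1 : ℝ) ≠ 0 := by positivity
  field_simp
  push_cast
  ring

lemma aM_sum0 (u : ℝ) (r : ℕ) : ∑ j ∈ range (r+2), fB u j * aM u r j = 0 := by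
  have h := row_rel u (r+2) (by omega)
  have key : ∑ j ∈ range (r+3), fB u j * aM u r j = 0 := by
    have : ∀ j ∈ range (r+3), fB u j * aM u r j
        = (1 / ((r + 1 : ℕ) + 1 : ℝ)) *
          (((r+2).choose j : ℝ) * fB u j * ((1-u) ^ (r+2 - j) - (-u) ^ (r+2 - j))) := by
      intro j _
      show fB u j * aM u r j = _
      rw [aM]
      push_cast
      ring
    rw [Finset.sum_congr rfl this, ← Finset.mul_sum]
    have h3 : r + 2 + 1 = r + 3 := rfl
    rw [h3] at h
    rw [h, mul_zero]
  rw [show r + 3 = (r+2) + 1 from rfl, Finset.sum_range_succ, aM_zero u r (r+2) le_rfl,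
    mul_zero, add_zero] at key
  exact key

lemma aM_sum1 (u : ℝ) (r : ℕ) : ∑ j ∈ range (r+1), fB u j * aM u r j = -fB u (r+1) := by
  have := aM_sum0 u r
  rw [show r + 2 = (r+1) + 1 from rfl, Finset.sum_range_succ, aM_diag, mul_one] at this
  linarith

lemma fB_def (u : ℝ) (j : ℕ) : fB u j = Polynomial.eval u ((Polynomial.bernoulli j).map (algebraMap ℚ ℝ)) := rfl

lemma aM_def (u : ℝ) (r j : ℕ) : aM u r j =
  (1 / ((r + 1 : ℕ) + 1 : ℝ)) * (((r + 1) + 1).choose j : ℝ) *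
    ((1 - u) ^ (r + 2 - j) - (-u) ^ (r + 2 - j)) := rfl

end BernoulliDetAux

open Finset Polynomial BernoulliDetAux in
theorem bernoulliPolynomial_eq_det (k : ℕ) (hk : 0 < k) (u : ℝ) :
    Polynomial.eval u ((Polynomial.bernoulli k).map (algebraMap ℚ ℝ)) =
      (-1 : ℝ) ^ k *
        Matrix.det (Matrix.of fun i j : Fin k =>
          (1 / (((i : ℕ) + 1 : ℕ) + 1 : ℝ)) * ((((i : ℕ) + 1) + 1).choose (j : ℕ) : ℝ) *
            ((1 - u) ^ ((i : ℕ) + 2 - (j : ℕ)) - (-u) ^ ((i : ℕ) + 2 - (j : ℕ)))) := by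
  obtain ⟨n, rfl⟩ : ∃ n, k = n + 1 := ⟨k - 1, by omega⟩
  have hMeq : (Matrix.of fun i j : Fin (n+1) =>
      (1 / (((i : ℕ) + 1 : ℕ) + 1 : ℝ)) * ((((i : ℕ) + 1) + 1).choose (j : ℕ) : ℝ) *
        ((1 - u) ^ ((i : ℕ) + 2 - (j : ℕ)) - (-u) ^ ((i : ℕ) + 2 - (j : ℕ))))
      = Matrix.of fun i j : Fin (n+1) => aM u i j := by
    funext i j
    rw [Matrix.of_apply, Matrix.of_apply, aM_def]
  rw [hMeq, ← fB_def]
  set M : Matrix (Fin (n+1)) (Fin (n+1)) ℝ := Matrix.of fun i j : Fin (n+1) => aM u i j with hM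
  have hMapp : ∀ i j : Fin (n+1), M i j = aM u i j := fun i j => rfl
  -- column operation
  have hc0 : fB u 0 = 1 := by rw [fB_def]; simp
  have hg : ∀ r : Fin (n+1), (∑ j : Fin (n+1), fB u (j : ℕ) • M r j)
      = (if (r : ℕ) = n then -fB u (n+1) else 0) := by
    intro r
    have h1 : ∑ j : Fin (n+1), fB u (j : ℕ) • M r j
        = ∑ j ∈ range (n+1), fB u j * aM u (r : ℕ) j := by
      rw [← Fin.sum_univ_eq_sum_range (fun j => fB u j * aM u (r : ℕ) j) (n+1)]
      exact Finset.sum_congr rfl fun j _ => by rw [smul_eq_mul, hMapp]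
    rw [h1]
    rcases eq_or_ne (r : ℕ) n with hr | hr
    · rw [if_pos hr]
      simp only [hr]
      exact aM_sum1 u n
    · have hr' : (r : ℕ) < n := by have := r.isLt; omega
      rw [if_neg hr]
      rw [← Finset.sum_subset (Finset.range_subset_range.2 (show (r:ℕ)+2 ≤ n+1 by omega))
        (fun j _ hj => by
          rw [aM_zero u (r:ℕ) j (by simp only [Finset.mem_range] at hj; omega), mul_zero])]
      exact aM_sum0 u (r : ℕ)
  have hdet : (M.updateCol 0 (fun r : Fin (n+1) =>
      if (r : ℕ) = n then -fB u (n+1) else 0)).det = M.det := by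
    have := Matrix.det_updateCol_sum M 0 (fun j : Fin (n+1) => fB u (j : ℕ))
    rw [show (fun k : Fin (n+1) => ∑ i : Fin (n+1), fB u (i : ℕ) • M k i)
        = (fun r : Fin (n+1) => if (r : ℕ) = n then -fB u (n+1) else 0) from funext hg] at this
    rw [this]
    simp [hc0]
  set N := M.updateCol 0 (fun r : Fin (n+1) =>
      if (r : ℕ) = n then -fB u (n+1) else 0) with hN
  -- Laplace expansion of N along column 0
  have hN0 : ∀ i : Fin (n+1), N i 0 = if (i : ℕ) = n then -fB u (n+1) else 0 := by
    intro i; rw [hN, Matrix.updateCol_apply, if_pos rfl]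
  have hNother : ∀ (i : Fin (n+1)) (j : Fin (n+1)), j ≠ 0 → N i j = M i j := by
    intro i j hj; rw [hN, Matrix.updateCol_apply, if_neg hj]
  have hminor : ∀ i : Fin (n+1),
      (N.submatrix i.succAbove Fin.succ) = fun p q : Fin n => M (i.succAbove p) q.succ := by
    intro i; funext p q
    rw [Matrix.submatrix_apply, hNother _ _ (Fin.succ_ne_zero q)]
  have hlap := Matrix.det_succ_column_zero N
  have hsingle : N.det = (-1 : ℝ) ^ n * (-fB u (n+1)) *
      (N.submatrix (Fin.last n).succAbove Fin.succ).det := by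
    rw [hlap]
    rw [Finset.sum_eq_single_of_mem (Fin.last n) (Finset.mem_univ _)
      (fun i _ hi => by
        rw [hN0, if_neg (fun h => hi (Fin.eq_of_val_eq (by simpa using h))), mul_zero, zero_mul])]
    rw [hN0, if_pos (by simp)]
    simp
  -- the minor is lower triangular with unit diagonal
  have hent : ∀ p q : Fin n, (N.submatrix (Fin.last n).succAbove Fin.succ) p q
      = aM u (p : ℕ) ((q : ℕ) + 1) := by
    intro p q
    rw [Matrix.submatrix_apply, hNother _ _ (Fin.succ_ne_zero q), hMapp,
      Fin.succAbove_last, Fin.coe_castSucc, Fin.val_succ]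
  have htri : (N.submatrix (Fin.last n).succAbove Fin.succ).det = 1 := by
    have hlt : Matrix.BlockTriangular
        (N.submatrix (Fin.last n).succAbove Fin.succ) OrderDual.toDual := by
      intro p q hpq
      have hpq' : (p : ℕ) < (q : ℕ) := hpq
      rw [hent]
      exact aM_zero u _ _ (by omega)
    rw [Matrix.det_of_lowerTriangular _ hlt,
      Finset.prod_congr rfl (fun p _ => (hent p p).trans (aM_diag u (p : ℕ)))]
    simp
  have : M.det = (-1 : ℝ) ^ n * (-fB u (n+1)) := by
    rw [← hdet, hsingle, htri, mul_one]
  rw [this]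
  have hpow : (-1 : ℝ) ^ (n+1) * ((-1 : ℝ) ^ n * (-fB u (n+1)))
      = ((-1 : ℝ) ^ (n+1) * (-1 : ℝ) ^ n) * (-fB u (n+1)) := by ring
  rw [hpow, ← pow_add]
  have hodd : Odd (n + 1 + n) := ⟨n, by omega⟩
  rw [hodd.neg_one_pow]
  ring
end

section
/- For all integers n \ge k \ge 1, the Bell polynomial of the second kind evaluated at (1/2, 1/3, ..., 1/(n-k+2)) equals (n!/(n+k)!) * \sum_{i=0}^{k} (-1)^{k-i} * binom(n+k, k-i) * S(n+i, i), where S denotes the Stirling numbers of the second kind. -/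
open Nat

/-- The Bell polynomials of the second kind `B_{n,k}(x_1, x_2, …)`, where `x i` denotes `x_i`. -/
noncomputable def bellPoly (n k : ℕ) (x : ℕ → ℚ) : ℚ :=
  ∑ ℓ ∈ (Fintype.piFinset fun _ : Fin n => Finset.range (n + 1)).filter
      (fun ℓ => (∑ i : Fin n, ((i : ℕ) + 1) * ℓ i) = n ∧ (∑ i : Fin n, ℓ i) = k),
    ((n ! : ℚ) / ∏ i : Fin n, ((ℓ i)! : ℚ)) *
      ∏ i : Fin n, (x ((i : ℕ) + 1) / (((i : ℕ) + 1)! : ℚ)) ^ ℓ i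

section Aux
open Finset PowerSeries

lemma choose_mul_helper (t j : ℕ) :
    (j : ℚ) * ((t+1).choose j) = (t+1) * ((t+1).choose j) - (t+1) * (t.choose j) := by
  have h : j * ((t+1).choose j) + (t+1) * (t.choose j) = (t+1) * ((t+1).choose j) := by
    cases j with
    | zero => simp
    | succ s =>
      have h1 : (s+1) * ((t+1).choose (s+1)) = (t+1) * t.choose s := by
        rw [mul_comm]
        rw [Nat.add_one_mul_choose_eq t s, mul_comm]
      rw [h1, Nat.choose_succ_succ (t) (s), Nat.mul_add]
  have := congrArg (fun x : ℕ => (x : ℚ)) h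
  push_cast at this
  linarith

lemma alt_sum_pow_eq_stirling (m : ℕ) : ∀ i : ℕ,
    ∑ j ∈ range (i+1), (-1:ℚ)^(i-j) * (i.choose j) * (j:ℚ)^m = i ! * stirling2 m i := by
  induction m with
  | zero =>
    intro i
    have h := add_pow (1:ℚ) (-1) i
    simp only [one_pow, one_mul] at h
    cases i with
    | zero => simp [stirling2]
    | succ t =>
      simp only [pow_zero, mul_one]
      have h0 : ((1:ℚ) + -1) ^ (t+1) = 0 := by norm_num
      rw [h0] at h
      rw [show stirling2 0 (t+1) = 0 from rfl]
      push_cast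
      rw [mul_zero]
      rw [← h]
  | succ m ih =>
    intro i
    cases i with
    | zero => simp [stirling2]
    | succ t =>
      have key : ∀ j ∈ range (t+2),
          (-1:ℚ)^(t+1-j) * ((t+1).choose j) * (j:ℚ)^(m+1)
            = (t+1) * ((-1:ℚ)^(t+1-j) * ((t+1).choose j) * (j:ℚ)^m)
              - (t+1) * ((-1:ℚ)^(t+1-j) * ((t).choose j) * (j:ℚ)^m) := by
        intro j hj
        have := choose_mul_helper t j
        calc (-1:ℚ)^(t+1-j) * ((t+1).choose j) * (j:ℚ)^(m+1)
            = (-1:ℚ)^(t+1-j) * ((j:ℚ) * ((t+1).choose j)) * (j:ℚ)^m := by ring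
          _ = (-1:ℚ)^(t+1-j) * ((t+1) * ((t+1).choose j) - (t+1) * (t.choose j)) * (j:ℚ)^m := by
              rw [this]
          _ = _ := by ring
      rw [Finset.sum_congr rfl key, Finset.sum_sub_distrib, ← Finset.mul_sum, ← Finset.mul_sum]
      have h1 : ∑ j ∈ range (t+2), (-1:ℚ)^(t+1-j) * ((t+1).choose j) * (j:ℚ)^m
          = (t+1)! * stirling2 m (t+1) := ih (t+1)
      have h2 : ∑ j ∈ range (t+2), (-1:ℚ)^(t+1-j) * ((t).choose j) * (j:ℚ)^m
          = - (t ! * stirling2 m t) := by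
        rw [Finset.sum_range_succ]
        have hz : ((t:ℕ).choose (t+1) : ℚ) = 0 := by
          norm_cast
          exact Nat.choose_eq_zero_of_lt (by omega)
        rw [hz, mul_zero, zero_mul, add_zero]
        rw [← neg_eq_iff_eq_neg, ← Finset.sum_neg_distrib]
        rw [← ih t]
        refine Finset.sum_congr rfl fun j hj => ?_
        rw [mem_range] at hj
        have : (t+1-j) = (t-j) + 1 := by omega
        rw [this]
        ring
      rw [h1, h2]
      rw [show stirling2 (m+1) (t+1) = (t + 1) * stirling2 m (t + 1) + stirling2 m t from rfl]
      rw [show (t+1)! = (t+1) * t ! from rfl]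
      push_cast
      ring

lemma coeff_exp_sub_one_pow_s4 (i m : ℕ) :
    (PowerSeries.coeff (R := ℚ) m) ((PowerSeries.exp ℚ - 1)^i)
      = (i ! : ℚ) * stirling2 m i / m ! := by
  have hpow : (PowerSeries.exp ℚ - 1)^i
      = ∑ j ∈ Finset.range (i+1),
          PowerSeries.exp ℚ ^ j * (-1)^(i-j) * ((i.choose j : ℕ) : ℚ⟦X⟧) := by
    rw [sub_eq_add_neg]
    exact add_pow _ _ _
  rw [hpow, map_sum, ← alt_sum_pow_eq_stirling m i, Finset.sum_div]
  refine Finset.sum_congr rfl fun j hj => ?_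
  have h1 : ((i.choose j : ℕ) : ℚ⟦X⟧) = PowerSeries.C (R := ℚ) ((i.choose j : ℕ) : ℚ) := by
    simp
  have h2 : ((-1 : ℚ⟦X⟧))^(i-j) = PowerSeries.C (R := ℚ) ((-1:ℚ)^(i-j)) := by
    simp
  rw [h1, h2, PowerSeries.coeff_mul_C, PowerSeries.coeff_mul_C,
    PowerSeries.exp_pow_eq_rescale_exp, PowerSeries.coeff_rescale, PowerSeries.coeff_exp]
  simp
  ring

lemma coeff_F_pow (n k : ℕ) :
    (PowerSeries.coeff (R := ℚ) (n+k)) ((PowerSeries.exp ℚ - 1 - PowerSeries.X)^k)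
      = ∑ i ∈ range (k+1),
          (-1:ℚ)^(k-i) * (k.choose i) * ((i ! : ℚ) * stirling2 (n+i) i / (n+i)!) := by
  have hpow : (PowerSeries.exp ℚ - 1 - PowerSeries.X : ℚ⟦X⟧)^k
      = ∑ i ∈ range (k+1),
          (PowerSeries.exp ℚ - 1)^i * (-PowerSeries.X)^(k-i) * ((k.choose i : ℕ) : ℚ⟦X⟧) := by
    rw [sub_eq_add_neg (PowerSeries.exp ℚ - 1)]
    exact add_pow _ _ _
  rw [hpow, map_sum]
  refine Finset.sum_congr rfl fun i hi => ?_
  rw [mem_range] at hi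
  have hik : i ≤ k := by omega
  have hx : (-PowerSeries.X : ℚ⟦X⟧)^(k-i)
      = PowerSeries.C (R := ℚ) ((-1:ℚ)^(k-i)) * PowerSeries.X^(k-i) := by
    rw [neg_pow]
    simp
  have hc : ((k.choose i : ℕ) : ℚ⟦X⟧) = PowerSeries.C (R := ℚ) ((k.choose i : ℕ) : ℚ) := by simp
  have harr : (PowerSeries.exp ℚ - 1)^i * (-PowerSeries.X)^(k-i) * ((k.choose i : ℕ) : ℚ⟦X⟧)
      = (PowerSeries.exp ℚ - 1)^i * PowerSeries.X^(k-i)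
          * PowerSeries.C (R := ℚ) ((-1:ℚ)^(k-i)) * PowerSeries.C (R := ℚ) ((k.choose i : ℕ) : ℚ) := by
    rw [hx, hc]; ring
  rw [harr, PowerSeries.coeff_mul_C, PowerSeries.coeff_mul_C, PowerSeries.coeff_mul_X_pow']
  rw [if_pos (by omega : k - i ≤ n + k)]
  have : n + k - (k - i) = n + i := by omega
  rw [this, coeff_exp_sub_one_pow_s4]
  ring

lemma low_coeff_pow (A : ℚ⟦X⟧) (hA : ∀ j ≤ 1, PowerSeries.coeff (R := ℚ) j A = 0) :
    ∀ k b, b < 2*k → PowerSeries.coeff (R := ℚ) b (A^k) = 0 := by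
  intro k
  induction k with
  | zero => intro b hb; omega
  | succ k ih =>
    intro b hb
    rw [pow_succ, PowerSeries.coeff_mul]
    apply Finset.sum_eq_zero
    rintro ⟨a, c⟩ hp
    rw [Finset.HasAntidiagonal.mem_antidiagonal] at hp
    by_cases hc : c ≤ 1
    · rw [hA c hc, mul_zero]
    · have : a < 2*k := by omega
      rw [ih a this, zero_mul]

lemma coeff_pow_congr (A B : ℚ⟦X⟧) (n : ℕ)
    (hA : ∀ j ≤ 1, PowerSeries.coeff (R := ℚ) j A = 0)
    (hB : ∀ j ≤ 1, PowerSeries.coeff (R := ℚ) j B = 0)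
    (hAB : ∀ j ≤ n+1, PowerSeries.coeff (R := ℚ) j A = PowerSeries.coeff (R := ℚ) j B) :
    ∀ k m, m ≤ n + k → PowerSeries.coeff (R := ℚ) m (A^k) = PowerSeries.coeff (R := ℚ) m (B^k) := by
  intro k
  induction k with
  | zero => intro m hm; rfl
  | succ k ih =>
    intro m hm
    rw [pow_succ, pow_succ, PowerSeries.coeff_mul, PowerSeries.coeff_mul]
    refine Finset.sum_congr rfl ?_
    rintro ⟨c, a⟩ hp
    rw [Finset.HasAntidiagonal.mem_antidiagonal] at hp
    by_cases ha : a ≤ 1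
    · rw [hA a ha, hB a ha, mul_zero, mul_zero]
    · by_cases hc : c < 2*k
      · rw [low_coeff_pow A hA k c hc, low_coeff_pow B hB k c hc, zero_mul, zero_mul]
      · have h1 : a ≤ n + 1 := by omega
        have h2 : c ≤ n + k := by omega
        rw [hAB a h1, ih c h2]

lemma monomial_eq_C_mul_X (d : ℕ) (a : ℚ) :
    PowerSeries.monomial (R := ℚ) d a = PowerSeries.C (R := ℚ) a * PowerSeries.X ^ d := by
  ext m
  rw [PowerSeries.coeff_monomial, PowerSeries.coeff_C_mul, PowerSeries.coeff_X_pow]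
  by_cases h : m = d <;> simp [h]

noncomputable def Ptr (n : ℕ) : ℚ⟦X⟧ :=
  ∑ i : Fin n, PowerSeries.monomial (R := ℚ) ((i : ℕ) + 2) (1 / (((i : ℕ) + 2)! : ℚ))

lemma coeff_F (j : ℕ) :
    PowerSeries.coeff (R := ℚ) j (PowerSeries.exp ℚ - 1 - PowerSeries.X)
      = if 2 ≤ j then 1 / (j ! : ℚ) else 0 := by
  rw [map_sub, map_sub, PowerSeries.coeff_exp]
  rcases j with _ | _ | j
  · simp
  · simp
  · have h1 : PowerSeries.coeff (R := ℚ) (j+2) (1 : ℚ⟦X⟧) = 0 := by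
      rw [← map_one (PowerSeries.C (R := ℚ)), PowerSeries.coeff_C]
      simp
    have h2 : PowerSeries.coeff (R := ℚ) (j+2) (PowerSeries.X : ℚ⟦X⟧) = 0 := by
      rw [PowerSeries.coeff_X]
      simp
    rw [h1, h2]
    simp

lemma coeff_Ptr (n j : ℕ) :
    PowerSeries.coeff (R := ℚ) j (Ptr n)
      = if 2 ≤ j ∧ j ≤ n + 1 then 1 / (j ! : ℚ) else 0 := by
  rw [Ptr, map_sum]
  simp only [PowerSeries.coeff_monomial]
  by_cases h : 2 ≤ j ∧ j ≤ n + 1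
  · obtain ⟨h2, hn⟩ := h
    rw [if_pos ⟨h2, hn⟩]
    have hj : j - 2 < n := by omega
    rw [Finset.sum_eq_single (⟨j - 2, hj⟩ : Fin n)]
    · rw [if_pos (by simp; omega)]
      have he : ((⟨j - 2, hj⟩ : Fin n) : ℕ) + 2 = j := by simp; omega
      rw [he]
    · intro b _ hb
      rw [if_neg]
      intro hc
      apply hb
      apply Fin.ext
      simp only at hc ⊢
      omega
    · intro h'
      exact absurd (Finset.mem_univ _) h'
  · rw [if_neg h]
    apply Finset.sum_eq_zero
    intro i _
    rw [if_neg]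
    intro hc
    have : (i : ℕ) < n := i.2
    omega

lemma coeff_Ptr_pow (n k : ℕ) :
    PowerSeries.coeff (R := ℚ) (n + k) ((Ptr n) ^ k)
      = ∑ ℓ ∈ Finset.piAntidiag (Finset.univ : Finset (Fin n)) k,
          (Nat.multinomial Finset.univ ℓ : ℚ) *
            (if (∑ i : Fin n, ((i : ℕ) + 2) * ℓ i) = n + k then
              ∏ i : Fin n, (1 / (((i : ℕ) + 2)! : ℚ)) ^ ℓ i else 0) := by
  rw [Ptr, Finset.sum_pow_eq_sum_piAntidiag, map_sum]
  refine Finset.sum_congr rfl fun ℓ hℓ => ?_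
  have hprod : ∏ i : Fin n, (PowerSeries.monomial (R := ℚ) ((i : ℕ) + 2) (1 / (((i : ℕ) + 2)! : ℚ))) ^ ℓ i
      = PowerSeries.C (R := ℚ) (∏ i : Fin n, (1 / (((i : ℕ) + 2)! : ℚ)) ^ ℓ i)
          * PowerSeries.X ^ (∑ i : Fin n, ((i : ℕ) + 2) * ℓ i) := by
    simp_rw [monomial_eq_C_mul_X, mul_pow, ← map_pow, ← pow_mul]
    rw [Finset.prod_mul_distrib, ← map_prod, Finset.prod_pow_eq_pow_sum]
  rw [hprod]
  have hnat : ((Nat.multinomial Finset.univ ℓ : ℕ) : ℚ⟦X⟧)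
      = PowerSeries.C (R := ℚ) ((Nat.multinomial Finset.univ ℓ : ℕ) : ℚ) := by simp
  rw [hnat, ← mul_assoc, ← map_mul, PowerSeries.coeff_C_mul, PowerSeries.coeff_X_pow]
  by_cases h : (∑ i : Fin n, ((i : ℕ) + 2) * ℓ i) = n + k
  · rw [if_pos h, if_pos (by omega), mul_one]
  · rw [if_neg h, if_neg (by omega), mul_zero, mul_zero]

end Aux

theorem bellPoly_inv_eq_sum_stirling (n k : ℕ) (hk : 1 ≤ k) (hkn : k ≤ n) :
    bellPoly n k (fun i => 1 / ((i : ℚ) + 1)) =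
      ((n ! : ℚ) / ((n + k)! : ℚ)) *
        ∑ i ∈ Finset.range (k + 1),
          (-1 : ℚ) ^ (k - i) * ((n + k).choose (k - i) : ℚ) * (stirling2 (n + i) i : ℚ) := by
  classical
  -- Step 1: bellPoly = (n!/k!) * coeff (n+k) (Ptr n)^k
  have hset : (Fintype.piFinset fun _ : Fin n => Finset.range (n + 1)).filter
        (fun ℓ => (∑ i : Fin n, ((i : ℕ) + 1) * ℓ i) = n ∧ (∑ i : Fin n, ℓ i) = k)
      = (Finset.piAntidiag (Finset.univ : Finset (Fin n)) k).filter
        (fun ℓ => (∑ i : Fin n, ((i : ℕ) + 2) * ℓ i) = n + k) := by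
    ext ℓ
    simp only [Finset.mem_filter, Fintype.mem_piFinset, Finset.mem_range, Finset.mem_piAntidiag,
      Finset.mem_univ, implies_true, and_true]
    have hss : Finset.univ.sum ℓ = ∑ i : Fin n, ℓ i := rfl
    rw [hss]
    have hsplit : (∑ i : Fin n, ((i : ℕ) + 2) * ℓ i)
        = (∑ i : Fin n, ((i : ℕ) + 1) * ℓ i) + (∑ i : Fin n, ℓ i) := by
      rw [← Finset.sum_add_distrib]
      exact Finset.sum_congr rfl fun i _ => by ring
    constructor
    · rintro ⟨hpi, hd, hs⟩
      exact ⟨hs, by omega⟩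
    · rintro ⟨hs, hd⟩
      refine ⟨fun i => ?_, by omega, hs⟩
      have : ℓ i ≤ ∑ j : Fin n, ℓ j :=
        Finset.single_le_sum (fun j _ => Nat.zero_le _) (Finset.mem_univ i)
      omega
  have hbell : bellPoly n k (fun i => 1 / ((i : ℚ) + 1))
      = ((n ! : ℚ) / (k ! : ℚ)) * PowerSeries.coeff (R := ℚ) (n + k) ((Ptr n) ^ k) := by
    rw [coeff_Ptr_pow]
    have : ∑ ℓ ∈ Finset.piAntidiag (Finset.univ : Finset (Fin n)) k,
          (Nat.multinomial Finset.univ ℓ : ℚ) *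
            (if (∑ i : Fin n, ((i : ℕ) + 2) * ℓ i) = n + k then
              ∏ i : Fin n, (1 / (((i : ℕ) + 2)! : ℚ)) ^ ℓ i else 0)
        = ∑ ℓ ∈ (Finset.piAntidiag (Finset.univ : Finset (Fin n)) k).filter
            (fun ℓ => (∑ i : Fin n, ((i : ℕ) + 2) * ℓ i) = n + k),
            (Nat.multinomial Finset.univ ℓ : ℚ) *
              ∏ i : Fin n, (1 / (((i : ℕ) + 2)! : ℚ)) ^ ℓ i := by
      rw [Finset.sum_filter]
      exact Finset.sum_congr rfl fun ℓ _ => by rw [mul_ite, mul_zero]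
    rw [this, ← hset]
    simp only [bellPoly, Finset.mul_sum]
    refine Finset.sum_congr rfl fun ℓ hℓ => ?_
    rw [Finset.mem_filter] at hℓ
    obtain ⟨hpi, hd, hs⟩ := hℓ
    have hprodfact : (∏ i : Fin n, ((ℓ i)! : ℚ)) ≠ 0 := by
      apply Finset.prod_ne_zero_iff.mpr
      intro i _
      exact_mod_cast (Nat.factorial_pos (ℓ i)).ne'
    have hmult : (Nat.multinomial Finset.univ ℓ : ℚ)
        = (k ! : ℚ) / ∏ i : Fin n, ((ℓ i)! : ℚ) := by
      have hspec := Nat.multinomial_spec Finset.univ ℓ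
      rw [hs] at hspec
      have := congrArg (fun x : ℕ => (x : ℚ)) hspec
      push_cast at this
      field_simp
      linarith [this]
    have hx : ∏ i : Fin n, ((1 / (((((i : ℕ) + 1 : ℕ)) : ℚ) + 1)) / ((((i : ℕ) + 1)! : ℕ) : ℚ)) ^ ℓ i
        = ∏ i : Fin n, (1 / (((i : ℕ) + 2)! : ℚ)) ^ ℓ i := by
      refine Finset.prod_congr rfl fun i _ => ?_
      congr 1
      rw [show ((i : ℕ) + 2)! = ((i : ℕ) + 2) * ((i : ℕ) + 1)! from rfl]
      have hne : ((((i : ℕ) + 1)! : ℕ) : ℚ) ≠ 0 := by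
        exact_mod_cast (Nat.factorial_pos _).ne'
      push_cast
      rw [div_div]
      congr 1
      ring
    rw [hx, hmult]
    have hkfac : (k ! : ℚ) ≠ 0 := by exact_mod_cast (Nat.factorial_pos k).ne'
    field_simp
  -- Step 2: replace Ptr by exp - 1 - X
  have hcongr : PowerSeries.coeff (R := ℚ) (n + k) ((Ptr n) ^ k)
      = PowerSeries.coeff (R := ℚ) (n + k) ((PowerSeries.exp ℚ - 1 - PowerSeries.X) ^ k) := by
    refine coeff_pow_congr _ _ n ?_ ?_ ?_ k (n + k) le_rfl
    · intro j hj
      rw [coeff_Ptr, if_neg (by omega)]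
    · intro j hj
      rw [coeff_F, if_neg (by omega)]
    · intro j hj
      rw [coeff_Ptr, coeff_F]
      by_cases h2 : 2 ≤ j
      · rw [if_pos ⟨h2, hj⟩, if_pos h2]
      · rw [if_neg (by omega), if_neg h2]
  rw [hbell, hcongr, coeff_F_pow, Finset.mul_sum, Finset.mul_sum]
  refine Finset.sum_congr rfl fun i hi => ?_
  rw [Finset.mem_range] at hi
  have hik : i ≤ k := by omega
  have hki : k - i ≤ n + k := by omega
  rw [Nat.cast_choose ℚ hik, Nat.cast_choose ℚ hki]
  have he : n + k - (k - i) = n + i := by omega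
  rw [he]
  have f1 : ((n+i)! : ℚ) ≠ 0 := by exact_mod_cast (Nat.factorial_pos _).ne'
  have f2 : ((k-i)! : ℚ) ≠ 0 := by exact_mod_cast (Nat.factorial_pos _).ne'
  have f3 : (i ! : ℚ) ≠ 0 := by exact_mod_cast (Nat.factorial_pos _).ne'
  have f4 : (k ! : ℚ) ≠ 0 := by exact_mod_cast (Nat.factorial_pos _).ne'
  have f5 : ((n+k)! : ℚ) ≠ 0 := by exact_mod_cast (Nat.factorial_pos _).ne'
  field_simp
end

section
/- Let u, v be k-times differentiable functions on an interval with v nonvanishing. Then the k-th derivative of u/v equals ((-1)^k / v^{k+1}) times the determinant of the (k+1)×(k+1) matrix whose first column is (u, u', ..., u^{(k)})^T and whose (\ell, m) entry for columns m = 0,...,k-1 (placed in columns 2 through k+1) and rows \ell = 0,...,k is binom(\ell, m) v^{(\ell-m)}, with the convention that binom(\ell,m) v^{(\ell-m)} = 0 when \ell < m. -/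
open Finset

lemma my_iteratedDeriv_eq_within {s : Set ℝ} (hs : IsOpen s) {f : ℝ → ℝ} (n : ℕ) {z : ℝ}
    (hz : z ∈ s) : iteratedDerivWithin n f s z = iteratedDeriv n f z := by
  rw [iteratedDerivWithin_eq_iteratedFDerivWithin, iteratedDeriv_eq_iteratedFDeriv,
    iteratedFDerivWithin_of_isOpen n hs hz]

lemma my_hasDerivAt_iteratedDeriv {s : Set ℝ} (hs : IsOpen s) {f : ℝ → ℝ} {N m : ℕ}
    (hf : ContDiffOn ℝ N f s) (hm : m < N) {z : ℝ} (hz : z ∈ s) :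
    HasDerivAt (iteratedDeriv m f) (iteratedDeriv (m + 1) f z) z := by
  have hdo : DifferentiableOn ℝ (iteratedDerivWithin m f s) s :=
    hf.differentiableOn_iteratedDerivWithin (by exact_mod_cast hm) hs.uniqueDiffOn
  have heq : (iteratedDerivWithin m f s) =ᶠ[nhds z] iteratedDeriv m f := by
    filter_upwards [hs.mem_nhds hz] with x hx using my_iteratedDeriv_eq_within hs m hx
  have hda : DifferentiableAt ℝ (iteratedDeriv m f) z := by
    have := (hdo z hz).differentiableAt (hs.mem_nhds hz)
    exact heq.differentiableAt_iff.mp this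
  have := hda.hasDerivAt
  rwa [iteratedDeriv_succ]

lemma my_leibniz {s : Set ℝ} (hs : IsOpen s) (n : ℕ) {f g : ℝ → ℝ}
    (hf : ContDiffOn ℝ n f s) (hg : ContDiffOn ℝ n g s) :
    ∀ z ∈ s, iteratedDeriv n (fun x => f x * g x) z =
      ∑ m ∈ range (n + 1), (n.choose m : ℝ) * iteratedDeriv m f z * iteratedDeriv (n - m) g z := by
  induction n with
  | zero => intro z hz; simp
  | succ n IH =>
    intro z hz
    have hfn : ContDiffOn ℝ n f s := hf.of_le (by exact_mod_cast Nat.le_succ n)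
    have hgn : ContDiffOn ℝ n g s := hg.of_le (by exact_mod_cast Nat.le_succ n)
    have hIH := IH hfn hgn
    have heq : iteratedDeriv n (fun x => f x * g x) =ᶠ[nhds z]
        fun x => ∑ m ∈ range (n + 1),
          (n.choose m : ℝ) * iteratedDeriv m f x * iteratedDeriv (n - m) g x := by
      filter_upwards [hs.mem_nhds hz] with x hx using hIH x hx
    have hterm : ∀ m ∈ range (n + 1), HasDerivAt
        (fun x => (n.choose m : ℝ) * iteratedDeriv m f x * iteratedDeriv (n - m) g x)
        ((n.choose m : ℝ) * (iteratedDeriv (m + 1) f z * iteratedDeriv (n - m) g z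
          + iteratedDeriv m f z * iteratedDeriv (n - m + 1) g z)) z := by
      intro m hm
      rw [mem_range] at hm
      have h1 : HasDerivAt (iteratedDeriv m f) (iteratedDeriv (m + 1) f z) z :=
        my_hasDerivAt_iteratedDeriv hs hf (by omega) hz
      have h2 : HasDerivAt (iteratedDeriv (n - m) g) (iteratedDeriv (n - m + 1) g z) z :=
        my_hasDerivAt_iteratedDeriv hs hg (by omega) hz
      have := ((h1.mul h2).const_mul ((n.choose m : ℝ)))
      simpa only [← mul_assoc, Pi.mul_apply] using this
    have hsum : HasDerivAt (fun x => ∑ m ∈ range (n + 1),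
        (n.choose m : ℝ) * iteratedDeriv m f x * iteratedDeriv (n - m) g x)
        (∑ m ∈ range (n + 1), (n.choose m : ℝ) *
          (iteratedDeriv (m + 1) f z * iteratedDeriv (n - m) g z
            + iteratedDeriv m f z * iteratedDeriv (n - m + 1) g z)) z :=
      HasDerivAt.fun_sum hterm
    rw [iteratedDeriv_succ, heq.deriv_eq, hsum.deriv]
    have key := Finset.sum_choose_succ_mul
      (fun i j => iteratedDeriv i f z * iteratedDeriv j g z) n
    calc ∑ m ∈ range (n + 1), (n.choose m : ℝ) *
          (iteratedDeriv (m + 1) f z * iteratedDeriv (n - m) g z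
            + iteratedDeriv m f z * iteratedDeriv (n - m + 1) g z)
        = (∑ m ∈ range (n + 1), (n.choose m : ℝ) *
            (iteratedDeriv m f z * iteratedDeriv (n + 1 - m) g z))
          + ∑ m ∈ range (n + 1), (n.choose m : ℝ) *
            (iteratedDeriv (m + 1) f z * iteratedDeriv (n - m) g z) := by
          rw [← Finset.sum_add_distrib]
          refine Finset.sum_congr rfl fun m hm => ?_
          rw [mem_range] at hm
          have : n + 1 - m = n - m + 1 := by omega
          rw [this]; ring
      _ = ∑ m ∈ range (n + 2), ((n + 1).choose m : ℝ) *
            (iteratedDeriv m f z * iteratedDeriv (n + 1 - m) g z) := key.symm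
      _ = ∑ m ∈ range (n + 1 + 1), ((n + 1).choose m : ℝ) *
            iteratedDeriv m f z * iteratedDeriv (n + 1 - m) g z := by
          refine Finset.sum_congr rfl fun m _ => by ring

theorem iteratedDeriv_div_eq_det (k : ℕ) (a b : ℝ) (u v : ℝ → ℝ)
    (hu : ContDiffOn ℝ k u (Set.Ioo a b)) (hv : ContDiffOn ℝ k v (Set.Ioo a b))
    (hv0 : ∀ x ∈ Set.Ioo a b, v x ≠ 0) (z : ℝ) (hz : z ∈ Set.Ioo a b) :
    iteratedDeriv k (fun x => u x / v x) z =
      ((-1 : ℝ) ^ k / (v z) ^ (k + 1)) *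
        Matrix.det (Matrix.of fun ℓ m : Fin (k + 1) =>
          if (m : ℕ) = 0 then iteratedDeriv (ℓ : ℕ) u z
          else if (m : ℕ) - 1 ≤ (ℓ : ℕ) then
            ((ℓ : ℕ).choose ((m : ℕ) - 1) : ℝ) * iteratedDeriv ((ℓ : ℕ) - ((m : ℕ) - 1)) v z
          else 0) := by
  have hs : IsOpen (Set.Ioo a b) := isOpen_Ioo
  set s : Set ℝ := Set.Ioo a b with hsdef
  set w : ℝ → ℝ := fun x => u x / v x with hwdef
  have hw : ContDiffOn ℝ k w s := hu.div hv hv0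
  -- the lower-triangular matrix A
  set A : Matrix (Fin (k + 1)) (Fin (k + 1)) ℝ := Matrix.of fun ℓ m : Fin (k + 1) =>
    if (m : ℕ) ≤ (ℓ : ℕ) then
      ((ℓ : ℕ).choose (m : ℕ) : ℝ) * iteratedDeriv ((ℓ : ℕ) - (m : ℕ)) v z
    else 0 with hAdef
  set σ : Equiv.Perm (Fin (k + 1)) := (finRotate (k + 1)).symm with hσdef
  set P : Matrix (Fin (k + 1)) (Fin (k + 1)) ℝ := A.submatrix id ⇑σ with hPdef
  set c : Fin (k + 1) → ℝ := fun j => iteratedDeriv ((σ j : Fin (k + 1)) : ℕ) w z with hcdef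
  -- values of σ
  have hσne : ∀ m : Fin (k + 1), m ≠ 0 → ((σ m : Fin (k + 1)) : ℕ) = (m : ℕ) - 1 := by
    intro m hm
    have hm1 : 1 ≤ (m : ℕ) := by
      rcases Nat.eq_zero_or_pos (m : ℕ) with h | h
      · exact absurd (Fin.ext h) hm
      · exact h
    have hlt : (m : ℕ) - 1 < k + 1 := by have := m.isLt; omega
    have : σ m = ⟨(m : ℕ) - 1, hlt⟩ := by
      rw [hσdef, Equiv.symm_apply_eq, finRotate_succ_apply]
      apply Fin.ext
      have hlast : (⟨(m : ℕ) - 1, hlt⟩ : Fin (k + 1)) < Fin.last k := by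
        rw [Fin.lt_iff_val_lt_val]
        simp only [Fin.last]
        have := m.isLt; omega
      rw [Fin.val_add_one_of_lt hlast]
      simp; omega
    rw [this]
  have hσ0 : σ 0 = Fin.last k := by
    rw [hσdef, Equiv.symm_apply_eq, finRotate_last]
  -- Leibniz: expansion of u's derivatives
  have hU : ∀ ℓ : Fin (k + 1), iteratedDeriv (ℓ : ℕ) u z = ∑ j, c j • P ℓ j := by
    intro ℓ
    have hℓk : (ℓ : ℕ) ≤ k := by have := ℓ.isLt; omega
    have hle : ((ℓ : ℕ) : WithTop ℕ∞) ≤ (k : WithTop ℕ∞) := by exact_mod_cast hℓk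
    have hEq : Set.EqOn u (fun x => w x * v x) s := by
      intro x hx
      rw [hwdef]
      exact (div_mul_cancel₀ (u x) (hv0 x hx)).symm
    have h1 : iteratedDeriv (ℓ : ℕ) u z = iteratedDeriv (ℓ : ℕ) (fun x => w x * v x) z :=
      hEq.iteratedDeriv_of_isOpen hs (ℓ : ℕ) hz
    have h2 := my_leibniz hs (ℓ : ℕ) (hw.of_le hle) (hv.of_le hle) z hz
    -- rewrite RHS
    have h3 : ∑ j, c j • P ℓ j = ∑ m : Fin (k + 1),
        iteratedDeriv (m : ℕ) w z • A ℓ m := by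
      rw [hPdef, hcdef]
      simp only [Matrix.submatrix_apply, id_eq]
      exact Equiv.sum_comp σ fun m => iteratedDeriv (m : ℕ) w z • A ℓ m
    have h4 : ∑ m : Fin (k + 1), iteratedDeriv (m : ℕ) w z • A ℓ m
        = ∑ m ∈ range (k + 1), iteratedDeriv m w z *
            (if m ≤ (ℓ : ℕ) then
              ((ℓ : ℕ).choose m : ℝ) * iteratedDeriv ((ℓ : ℕ) - m) v z else 0) := by
      simp only [smul_eq_mul, hAdef, Matrix.of_apply]
      exact Fin.sum_univ_eq_sum_range (fun m => iteratedDeriv m w z *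
        (if m ≤ (ℓ : ℕ) then ((ℓ : ℕ).choose m : ℝ) * iteratedDeriv ((ℓ : ℕ) - m) v z else 0)) _
    have h5 : ∑ m ∈ range (k + 1), iteratedDeriv m w z *
            (if m ≤ (ℓ : ℕ) then
              ((ℓ : ℕ).choose m : ℝ) * iteratedDeriv ((ℓ : ℕ) - m) v z else 0)
        = ∑ m ∈ range ((ℓ : ℕ) + 1), ((ℓ : ℕ).choose m : ℝ) *
            iteratedDeriv m w z * iteratedDeriv ((ℓ : ℕ) - m) v z := by
      rw [← Finset.sum_subset (Finset.range_subset_range.mpr (by omega : (ℓ : ℕ) + 1 ≤ k + 1))]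
      · refine Finset.sum_congr rfl fun m hm => ?_
        rw [mem_range] at hm
        rw [if_pos (by omega)]; ring
      · intro m hm hnm
        rw [mem_range] at hm hnm
        rw [if_neg (by omega), mul_zero]
    rw [h1, h2, h3, h4, h5]
  -- identify the statement matrix
  have hM : (Matrix.of fun ℓ m : Fin (k + 1) =>
          if (m : ℕ) = 0 then iteratedDeriv (ℓ : ℕ) u z
          else if (m : ℕ) - 1 ≤ (ℓ : ℕ) then
            ((ℓ : ℕ).choose ((m : ℕ) - 1) : ℝ) * iteratedDeriv ((ℓ : ℕ) - ((m : ℕ) - 1)) v z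
          else 0)
      = P.updateCol 0 (fun ℓ => ∑ j, c j • P ℓ j) := by
    ext ℓ m
    by_cases hm : m = 0
    · subst hm
      rw [Matrix.updateCol_self]
      simp only [Matrix.of_apply, Fin.val_zero, if_pos rfl]
      exact hU ℓ
    · rw [Matrix.updateCol_ne hm]
      have hm' : (m : ℕ) ≠ 0 := fun h => hm (Fin.ext h)
      simp only [Matrix.of_apply, if_neg hm', hPdef, Matrix.submatrix_apply, id_eq, hAdef,
        hσne m hm]
  rw [hM, Matrix.det_updateCol_sum P 0 c]
  -- compute c 0
  have hc0 : c 0 = iteratedDeriv k w z := by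
    simp only [hcdef, hσ0, Fin.val_last]
  -- det P
  have hdetA : A.det = (v z) ^ (k + 1) := by
    rw [Matrix.det_of_lowerTriangular A]
    · have : ∀ i : Fin (k + 1), A i i = v z := by
        intro i
        simp [hAdef, Nat.choose_self]
      rw [Finset.prod_congr rfl fun i _ => this i]
      simp
    · intro i j hij
      have hlt : (i : ℕ) < (j : ℕ) := hij
      simp only [hAdef, Matrix.of_apply]
      rw [if_neg (by omega)]
  have hdetP : P.det = (-1 : ℝ) ^ k * (v z) ^ (k + 1) := by
    rw [hPdef, Matrix.det_permute' σ A, hdetA]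
    congr 1
    have hsign : Equiv.Perm.sign σ = (-1) ^ k := by
      have : σ = (finRotate (k + 1))⁻¹ := rfl
      rw [this, Equiv.Perm.sign_inv, sign_finRotate, Nat.add_sub_cancel]
    rw [hsign]
    push_cast
    simp
  rw [hdetP, hc0, smul_eq_mul]
  have hvz : v z ≠ 0 := hv0 z hz
  have hp : (v z) ^ (k + 1) ≠ 0 := pow_ne_zero _ hvz
  have h1 : ((-1 : ℝ)) ^ k * (-1 : ℝ) ^ k = 1 := by rw [← mul_pow]; norm_num
  rw [show (-1 : ℝ) ^ k / v z ^ (k + 1) * (iteratedDeriv k w z * ((-1 : ℝ) ^ k * v z ^ (k + 1)))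
      = iteratedDeriv k w z * ((-1 : ℝ) ^ k * (-1 : ℝ) ^ k) * (v z ^ (k + 1) / v z ^ (k + 1))
      by ring, h1, div_self hp, mul_one, mul_one]
end

section
/- For every positive integer n, (-1)^n n! times the determinant of the n×n matrix with entry [(1-u)^{\ell-m+1} - (-u)^{\ell-m+1}] / (\ell-m+1)! in row \ell (1 \le \ell \le n) and column m (0 \le m \le n-1) (where terms with \ell - m + 1 < 0 are zero) equals the Bernoulli polynomial B_n(u). -/
open Nat

noncomputable def bpol (u : ℝ) (m : ℕ) : ℝ :=
  Polynomial.eval u ((Polynomial.bernoulli m).map (algebraMap ℚ ℝ)) / (m ! : ℝ)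

noncomputable def cf (u : ℝ) (k : ℕ) : ℝ := ((1 - u) ^ k - (-u) ^ k) / (k ! : ℝ)

open PowerSeries in
lemma QP_eq_X (u : ℝ) :
    (PowerSeries.mk fun k => cf u k) * (PowerSeries.mk fun m => bpol u m) = PowerSeries.X := by
  have hQ : (PowerSeries.mk fun k => cf u k) =
      rescale (1 - u) (exp ℝ) - rescale (-u) (exp ℝ) := by
    ext k
    simp only [coeff_mk, map_sub, coeff_rescale, coeff_exp, cf]
    rw [eq_ratCast, Rat.cast_div, Rat.cast_one]
    push_cast
    ring
  have hP : (PowerSeries.mk fun m => bpol u m) =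
      PowerSeries.mk fun n => Polynomial.aeval u ((1 / n ! : ℚ) • Polynomial.bernoulli n) := by
    ext n
    simp only [coeff_mk, bpol]
    rw [map_smul, Polynomial.aeval_def, Polynomial.eval₂_eq_eval_map, Rat.smul_def]
    rw [Rat.cast_div, Rat.cast_one]
    push_cast
    ring
  have hgen := Polynomial.bernoulli_generating_function (A := ℝ) u
  have h1 : rescale (-u) (exp ℝ) * exp ℝ = rescale (1 - u) (exp ℝ) := by
    have h0 : rescale (1 : ℝ) (exp ℝ) = exp ℝ := by rw [rescale_one]; rfl
    nth_rw 2 [← h0]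
    rw [exp_mul_exp_eq_exp_add, neg_add_eq_sub]
  have h2 : rescale (-u) (exp ℝ) * rescale u (exp ℝ) = 1 := by
    rw [exp_mul_exp_eq_exp_add]
    norm_num [rescale_zero]
  rw [hQ, hP, ← h1]
  calc (rescale (-u) (exp ℝ) * exp ℝ - rescale (-u) (exp ℝ)) *
        (PowerSeries.mk fun n => Polynomial.aeval u ((1 / n ! : ℚ) • Polynomial.bernoulli n))
      = rescale (-u) (exp ℝ) *
        ((PowerSeries.mk fun n => Polynomial.aeval u ((1 / n ! : ℚ) • Polynomial.bernoulli n)) *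
          (exp ℝ - 1)) := by ring
    _ = rescale (-u) (exp ℝ) * (PowerSeries.X * rescale u (exp ℝ)) := by rw [hgen]
    _ = PowerSeries.X * (rescale (-u) (exp ℝ) * rescale u (exp ℝ)) := by ring
    _ = PowerSeries.X := by rw [h2, mul_one]

lemma conv (u : ℝ) (N : ℕ) :
    ∑ k ∈ Finset.range (N + 3), cf u k * bpol u (N + 2 - k) = 0 := by
  have h := congrArg (PowerSeries.coeff (N + 2)) (QP_eq_X u)
  rw [PowerSeries.coeff_mul, Finset.Nat.sum_antidiagonal_eq_sum_range_succ_mk] at h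
  simpa [PowerSeries.coeff_X] using h

lemma cf_zero (u : ℝ) : cf u 0 = 0 := by simp [cf]

lemma cf_one (u : ℝ) : cf u 1 = 1 := by simp [cf]

lemma row_sum (u : ℝ) (n : ℕ) (i : Fin n) :
    ∑ j ∈ Finset.range n, cf u ((i : ℕ) + 2 - j) * bpol u j =
      if (i : ℕ) + 1 = n then -bpol u n else 0 := by
  set f : ℕ → ℝ := fun j => cf u ((i : ℕ) + 2 - j) * bpol u j with hf
  have hzero : ∀ j, (i : ℕ) + 2 ≤ j → f j = 0 := by
    intro j hj
    have h0 : (i : ℕ) + 2 - j = 0 := by omega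
    simp [hf, h0, cf_zero]
  have hrefl : ∑ j ∈ Finset.range ((i : ℕ) + 3), f j = 0 := by
    have h1 := Finset.sum_range_reflect (fun k => cf u k * bpol u ((i : ℕ) + 2 - k)) ((i : ℕ) + 3)
    rw [conv u i] at h1
    rw [← h1]
    apply Finset.sum_congr rfl
    intro j hj
    simp only [Finset.mem_range] at hj
    simp only [hf]
    rw [show (i : ℕ) + 3 - 1 - j = (i : ℕ) + 2 - j by omega,
      show (i : ℕ) + 2 - ((i : ℕ) + 2 - j) = j by omega]
  split_ifs with h
  · have hn : n = (i : ℕ) + 1 := h.symm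
    have e1 : ∑ j ∈ Finset.range ((i : ℕ) + 3), f j =
        (∑ j ∈ Finset.range ((i : ℕ) + 1), f j) + f ((i : ℕ) + 1) + f ((i : ℕ) + 2) := by
      rw [Finset.sum_range_succ, Finset.sum_range_succ]
    have e2 : f ((i : ℕ) + 2) = 0 := hzero _ le_rfl
    have e3 : f ((i : ℕ) + 1) = bpol u n := by
      simp only [hf]
      rw [show (i : ℕ) + 2 - ((i : ℕ) + 1) = 1 by omega, cf_one, one_mul, h]
    rw [show Finset.range n = Finset.range ((i : ℕ) + 1) from congrArg Finset.range hn]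
    rw [e1, e2, e3] at hrefl
    linarith
  · have hi : (i : ℕ) < n := i.isLt
    have h2 : (i : ℕ) + 2 ≤ n := by omega
    have e1 : ∑ j ∈ Finset.range ((i : ℕ) + 2), f j = ∑ j ∈ Finset.range n, f j := by
      apply Finset.sum_subset (Finset.range_subset_range.mpr h2)
      intro x hx hnx
      simp only [Finset.mem_range] at hx hnx
      exact hzero x (by omega)
    have e2 : ∑ j ∈ Finset.range ((i : ℕ) + 3), f j =
        (∑ j ∈ Finset.range ((i : ℕ) + 2), f j) + f ((i : ℕ) + 2) := Finset.sum_range_succ f _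
    rw [e2, hzero _ le_rfl, add_zero, e1] at hrefl
    rw [hrefl]

theorem det_eq_bernoulliPolynomial (n : ℕ) (hn : 0 < n) (u : ℝ) :
    (-1 : ℝ) ^ n * (n ! : ℝ) *
        Matrix.det (Matrix.of fun i j : Fin n =>
          if (j : ℕ) ≤ (i : ℕ) + 2 then
            ((1 - u) ^ ((i : ℕ) + 2 - (j : ℕ)) - (-u) ^ ((i : ℕ) + 2 - (j : ℕ))) /
              (((i : ℕ) + 2 - (j : ℕ))! : ℝ)
          else 0) =
      Polynomial.eval u ((Polynomial.bernoulli n).map (algebraMap ℚ ℝ)) := by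
  obtain ⟨m, rfl⟩ : ∃ m, n = m + 1 := ⟨n - 1, by omega⟩
  set H : Matrix (Fin (m + 1)) (Fin (m + 1)) ℝ :=
    Matrix.of (fun i j : Fin (m + 1) => cf u ((i : ℕ) + 2 - (j : ℕ))) with hHdef
  have hH : (Matrix.of fun i j : Fin (m + 1) =>
      if (j : ℕ) ≤ (i : ℕ) + 2 then
        ((1 - u) ^ ((i : ℕ) + 2 - (j : ℕ)) - (-u) ^ ((i : ℕ) + 2 - (j : ℕ))) /
          (((i : ℕ) + 2 - (j : ℕ))! : ℝ)
      else 0) = H := by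
    ext i j
    simp only [Matrix.of_apply, hHdef]
    split_ifs with h
    · rfl
    · have h0 : (i : ℕ) + 2 - (j : ℕ) = 0 := by omega
      rw [h0, cf_zero]
  rw [hH]
  -- the vector of Bernoulli values
  have hmv : H.mulVec (fun j : Fin (m + 1) => bpol u (j : ℕ)) =
      fun i : Fin (m + 1) => if (i : ℕ) + 1 = m + 1 then -bpol u (m + 1) else 0 := by
    funext i
    have hr := row_sum u (m + 1) i
    rw [← Fin.sum_univ_eq_sum_range (fun j => cf u ((i : ℕ) + 2 - j) * bpol u j) (m + 1)] at hr
    simpa [Matrix.mulVec, dotProduct, hHdef] using hr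
  have hc : H.det • (fun j : Fin (m + 1) => bpol u (j : ℕ)) =
      Matrix.cramer H
        (fun i : Fin (m + 1) => if (i : ℕ) + 1 = m + 1 then -bpol u (m + 1) else 0) := by
    rw [Matrix.cramer_eq_adjugate_mulVec, ← hmv, Matrix.mulVec_mulVec, Matrix.adjugate_mul,
      Matrix.smul_mulVec, Matrix.one_mulVec]
  have hc0 := congrFun hc 0
  have hb0 : bpol u 0 = 1 := by
    simp [bpol, Polynomial.bernoulli_zero]
  -- rewrite the RHS vector as a scalar multiple of a basis vector
  have hy : (fun i : Fin (m + 1) => if (i : ℕ) + 1 = m + 1 then -bpol u (m + 1) else 0) =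
      (-bpol u (m + 1)) • (fun i : Fin (m + 1) => if i = Fin.last m then (1 : ℝ) else 0) := by
    funext i
    have : (i : ℕ) + 1 = m + 1 ↔ i = Fin.last m := by
      rw [Fin.ext_iff, Fin.val_last]; omega
    simp only [Pi.smul_apply, smul_eq_mul, mul_ite, mul_one, mul_zero, this]
  have hdet1 : (H.updateCol 0
      (fun i : Fin (m + 1) => if i = Fin.last m then (1 : ℝ) else 0)).det = (-1) ^ m := by
    rw [Matrix.det_succ_column_zero]
    rw [Finset.sum_eq_single (Fin.last m)]
    · have hsub : ((H.updateCol 0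
          (fun i : Fin (m + 1) => if i = Fin.last m then (1 : ℝ) else 0)).submatrix
            (Fin.last m).succAbove Fin.succ) =
          Matrix.of (fun r s : Fin m => cf u ((r : ℕ) + 1 - (s : ℕ))) := by
        ext r s
        rw [Matrix.submatrix_apply, Fin.succAbove_last_apply,
          Matrix.updateCol_ne (Fin.succ_ne_zero s)]
        simp only [hHdef, Matrix.of_apply, Fin.coe_castSucc, Fin.val_succ]
        congr 1
        omega
      rw [hsub]
      have htri : Matrix.BlockTriangular
          (Matrix.of (fun r s : Fin m => cf u ((r : ℕ) + 1 - (s : ℕ)))) OrderDual.toDual := by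
        intro r s hrs
        have hlt : r < s := hrs
        have h0 : (r : ℕ) + 1 - (s : ℕ) = 0 := by
          have := Fin.lt_iff_val_lt_val.mp hlt
          omega
        simp only [Matrix.of_apply, h0, cf_zero]
      rw [Matrix.det_of_lowerTriangular _ htri]
      simp [Matrix.updateCol_self, cf_one]
    · intro i _ hne
      rw [Matrix.updateCol_self]
      simp [hne]
    · intro habs
      exact absurd (Finset.mem_univ _) habs
  rw [hy, Matrix.cramer_apply, Matrix.det_updateCol_smul, hdet1] at hc0
  simp only [Pi.smul_apply, smul_eq_mul, Fin.val_zero, hb0, mul_one] at hc0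
  rw [hc0]
  have hfac : ((m + 1)! : ℝ) ≠ 0 := Nat.cast_ne_zero.mpr (Nat.factorial_ne_zero _)
  have : Polynomial.eval u ((Polynomial.bernoulli (m + 1)).map (algebraMap ℚ ℝ)) =
      ((m + 1)! : ℝ) * bpol u (m + 1) := by
    rw [bpol]; field_simp
  rw [this]
  ring_nf
  rw [show ((-1 : ℝ)) ^ (m * 2) = 1 from by rw [pow_mul']; norm_num]
  ring
end
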